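/- Let ψ : [0,∞) → ℝ be continuous with ψ(t) > 0 for all t ≥ t̄, and assume ∫₀^∞ ψ(t) dt = ∞. Let g₁, g₂ : [0,∞) → [0,∞) be continuous with g₁(t)/ψ(t) → 0 as t → ∞ and ∫₀^∞ g₂ < ∞. Then for every ρ > 0, t₀ ≥ t̄, and α > 0, there exists T > 0 such that whenever 0 ≤ z₀ < α, the solution z(t) = z₀ e^{−∫_{t₀}^t ψ} + ∫_{t₀}^t (g₁(τ)+g₂(τ)) e^{−∫_τ^t ψ(λ)dλ} dτ of z' = −ψ(t) z + g₁(t) + g₂(t), z(t₀) = z₀, satisfies 0 ≤ z(t) < ρ for all t ≥ t₀ + T. -/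

import Mathlib

open Real Filter intervalIntegral

set_option maxHeartbeats 1600000 in
theorem stmt_8 (ψ g₁ g₂ : ℝ → ℝ) (tbar : ℝ) (htbar : 0 ≤ tbar)
    (hψc : Continuous ψ) (hψpos : ∀ t ≥ tbar, 0 < ψ t)
    (hψdiv : Tendsto (fun t => ∫ τ in (0:ℝ)..t, ψ τ) atTop atTop)
    (hg₁c : Continuous g₁) (hg₂c : Continuous g₂)
    (hg₁nn : ∀ t ≥ (0:ℝ), 0 ≤ g₁ t) (hg₂nn : ∀ t ≥ (0:ℝ), 0 ≤ g₂ t)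
    (hg₁lim : Tendsto (fun t => g₁ t / ψ t) atTop (nhds 0))
    (hg₂int : MeasureTheory.IntegrableOn g₂ (Set.Ici (0:ℝ))) :
    ∀ ρ > (0:ℝ), ∀ t₀ ≥ tbar, ∀ α > (0:ℝ), ∃ T > (0:ℝ), ∀ z₀, 0 ≤ z₀ → z₀ < α →
      ∀ t ≥ t₀ + T,
        0 ≤ z₀ * Real.exp (-∫ τ in t₀..t, ψ τ) +
            ∫ τ in t₀..t, (g₁ τ + g₂ τ) * Real.exp (-∫ l in τ..t, ψ l) ∧
        z₀ * Real.exp (-∫ τ in t₀..t, ψ τ) +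
            ∫ τ in t₀..t, (g₁ τ + g₂ τ) * Real.exp (-∫ l in τ..t, ψ l) < ρ := by
  intro ρ hρ t₀ ht₀ α hα
  have hψint : ∀ a b : ℝ, IntervalIntegrable ψ MeasureTheory.volume a b :=
    fun a b => hψc.intervalIntegrable a b
  set Ψ : ℝ → ℝ := fun t => ∫ τ in (0:ℝ)..t, ψ τ with hΨdef
  have hΨderiv : ∀ x : ℝ, HasDerivAt Ψ (ψ x) x := fun x =>
    intervalIntegral.integral_hasDerivAt_right (hψint 0 x)
      (hψc.stronglyMeasurableAtFilter _ _) hψc.continuousAt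
  have hΨcont : Continuous Ψ :=
    continuous_iff_continuousAt.2 fun x => (hΨderiv x).continuousAt
  have hsub : ∀ τ t : ℝ, (∫ l in τ..t, ψ l) = Ψ t - Ψ τ := fun τ t =>
    (intervalIntegral.integral_interval_sub_left (hψint 0 t) (hψint 0 τ)).symm
  have hΨmono : ∀ a b : ℝ, tbar ≤ a → a ≤ b → Ψ a ≤ Ψ b := by
    intro a b ha hab
    have h0 : 0 ≤ ∫ l in a..b, ψ l :=
      intervalIntegral.integral_nonneg hab (fun x hx => (hψpos x (ha.trans hx.1)).le)
    rw [hsub] at h0; linarith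
  have hexp0 : Tendsto (fun t => Real.exp (-Ψ t)) atTop (nhds 0) :=
    Real.tendsto_exp_atBot.comp (tendsto_neg_atTop_atBot.comp hψdiv)
  -- continuity of the rewritten integrand
  set F : ℝ → ℝ := fun τ => (g₁ τ + g₂ τ) * Real.exp (Ψ τ) with hFdef
  have hFc : Continuous F := (hg₁c.add hg₂c).mul (Real.continuous_exp.comp hΨcont)
  -- FTC for ψ · exp ∘ Ψ
  have hFTC : ∀ a b : ℝ,
      (∫ τ in a..b, ψ τ * Real.exp (Ψ τ)) = Real.exp (Ψ b) - Real.exp (Ψ a) := by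
    intro a b
    refine intervalIntegral.integral_eq_sub_of_hasDerivAt
      (f := fun u => Real.exp (Ψ u)) (fun x _ => ?_)
      (Continuous.intervalIntegrable (by fun_prop) a b)
    have := (hΨderiv x).exp
    exact this.congr_deriv (by ring)
  -- choose t₁' beyond which g₁ ≤ (ρ/4) ψ
  obtain ⟨t₁', ht₁'⟩ := eventually_atTop.1
    (hg₁lim.eventually_lt_const (by positivity : (0:ℝ) < ρ/4))
  -- the g₂ tail
  set L : ℝ := ∫ τ in Set.Ioi (0:ℝ), g₂ τ with hLdef
  have hGlim : Tendsto (fun t : ℝ => ∫ τ in (0:ℝ)..t, g₂ τ) atTop (nhds L) :=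
    MeasureTheory.intervalIntegral_tendsto_integral_Ioi 0
      (hg₂int.mono_set Set.Ioi_subset_Ici_self) tendsto_id
  have hGle : ∀ t : ℝ, 0 ≤ t → (∫ τ in (0:ℝ)..t, g₂ τ) ≤ L := by
    intro t ht
    rw [intervalIntegral.integral_of_le ht]
    refine MeasureTheory.setIntegral_mono_set (hg₂int.mono_set Set.Ioi_subset_Ici_self)
      ?_ (HasSubset.Subset.eventuallyLE Set.Ioc_subset_Ioi_self)
    exact (MeasureTheory.ae_restrict_iff' measurableSet_Ioi).2
      (MeasureTheory.ae_of_all _ fun x hx => hg₂nn x hx.le)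
  obtain ⟨t₂', ht₂'⟩ := eventually_atTop.1
    ((hGlim.eventually_const_lt (by linarith : L - ρ/4 < L)).and (eventually_ge_atTop (0:ℝ)))
  obtain ⟨hGt₂', ht₂'0⟩ := ht₂' t₂' le_rfl
  set t₂ : ℝ := max t₂' (max t₁' t₀) with ht₂def
  have ht₀t₂ : t₀ ≤ t₂ := le_trans (le_max_right _ _) (le_max_right _ _)
  have ht₁'t₂ : t₁' ≤ t₂ := le_trans (le_max_left _ _) (le_max_right _ _)
  have ht₂'t₂ : t₂' ≤ t₂ := le_max_left _ _
  have ht₂0 : (0:ℝ) ≤ t₂ := le_trans (le_trans htbar ht₀) ht₀t₂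
  have hg₂ii : ∀ a b : ℝ, IntervalIntegrable g₂ MeasureTheory.volume a b :=
    fun a b => hg₂c.intervalIntegrable a b
  have hGt₂ : (∫ τ in (0:ℝ)..t₂', g₂ τ) ≤ ∫ τ in (0:ℝ)..t₂, g₂ τ := by
    have h0 : 0 ≤ ∫ τ in t₂'..t₂, g₂ τ :=
      intervalIntegral.integral_nonneg ht₂'t₂ (fun x hx => hg₂nn x (le_trans ht₂'0 hx.1))
    have hsplit := intervalIntegral.integral_interval_sub_left (hg₂ii 0 t₂) (hg₂ii 0 t₂')
    linarith
  have htail₂ : ∀ t : ℝ, t₂ ≤ t → (∫ τ in t₂..t, g₂ τ) < ρ/4 := by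
    intro t ht
    have hsplit := intervalIntegral.integral_interval_sub_left (hg₂ii 0 t) (hg₂ii 0 t₂)
    have h1 : (∫ τ in (0:ℝ)..t, g₂ τ) ≤ L := hGle t (le_trans ht₂0 ht)
    linarith
  -- constants
  set C : ℝ := ∫ τ in t₀..t₂, F τ with hCdef
  have hC0 : 0 ≤ C := by
    refine intervalIntegral.integral_nonneg ht₀t₂ (fun x hx => ?_)
    have hx0 : (0:ℝ) ≤ x := le_trans (le_trans htbar ht₀) hx.1
    exact mul_nonneg (add_nonneg (hg₁nn x hx0) (hg₂nn x hx0)) (Real.exp_pos _).le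
  set A : ℝ := α * Real.exp (Ψ t₀) + C with hAdef
  have hA0 : 0 < A := by
    have := Real.exp_pos (Ψ t₀); nlinarith
  set δ : ℝ := (ρ/2) / (A + 1) with hδdef
  have hδ0 : 0 < δ := by positivity
  obtain ⟨t₃, ht₃⟩ := eventually_atTop.1 (hexp0.eventually_lt_const hδ0)
  clear_value L C A δ t₂
  refine ⟨max (max (t₃ - t₀) (t₂ - t₀)) 0 + 1,
    by nlinarith [le_max_right (max (t₃ - t₀) (t₂ - t₀)) (0:ℝ)], ?_⟩
  intro z₀ hz₀ hz₀α t ht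
  have hm1 := le_max_left (max (t₃ - t₀) (t₂ - t₀)) (0:ℝ)
  have htt₂ : t₂ ≤ t := by
    have := le_max_right (t₃ - t₀) (t₂ - t₀); linarith
  have htt₃ : t₃ ≤ t := by
    have := le_max_left (t₃ - t₀) (t₂ - t₀); linarith
  have ht₀t : t₀ ≤ t := le_trans ht₀t₂ htt₂
  -- nonnegativity
  have hnn : 0 ≤ z₀ * Real.exp (-∫ τ in t₀..t, ψ τ) +
      ∫ τ in t₀..t, (g₁ τ + g₂ τ) * Real.exp (-∫ l in τ..t, ψ l) := by
    have h1 : 0 ≤ z₀ * Real.exp (-∫ τ in t₀..t, ψ τ) :=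
      mul_nonneg hz₀ (Real.exp_pos _).le
    have h2 : 0 ≤ ∫ τ in t₀..t, (g₁ τ + g₂ τ) * Real.exp (-∫ l in τ..t, ψ l) := by
      refine intervalIntegral.integral_nonneg ht₀t (fun x hx => ?_)
      have hx0 : (0:ℝ) ≤ x := le_trans (le_trans htbar ht₀) hx.1
      exact mul_nonneg (add_nonneg (hg₁nn x hx0) (hg₂nn x hx0)) (Real.exp_pos _).le
    linarith
  refine ⟨hnn, ?_⟩
  -- rewrite the main integral
  have hrw : (∫ τ in t₀..t, (g₁ τ + g₂ τ) * Real.exp (-∫ l in τ..t, ψ l)) =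
      (∫ τ in t₀..t, F τ) * Real.exp (-Ψ t) := by
    rw [← intervalIntegral.integral_mul_const]
    refine intervalIntegral.integral_congr (fun τ _ => ?_)
    rw [hsub, show -(Ψ t - Ψ τ) = Ψ τ + -(Ψ t) by ring, Real.exp_add]
    simp only [hFdef]; ring
  -- split the integral at t₂
  have hsplit : (∫ τ in t₀..t, F τ) = C + ∫ τ in t₂..t, F τ := by
    rw [hCdef, intervalIntegral.integral_add_adjacent_intervals
      (hFc.intervalIntegrable t₀ t₂) (hFc.intervalIntegrable t₂ t)]
  -- tail estimate
  have htail : (∫ τ in t₂..t, F τ) ≤ (ρ/2) * Real.exp (Ψ t) := by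
    have hmono : (∫ τ in t₂..t, F τ) ≤
        ∫ τ in t₂..t, ((ρ/4) * (ψ τ * Real.exp (Ψ τ)) + g₂ τ * Real.exp (Ψ t)) := by
      refine intervalIntegral.integral_mono_on htt₂ (hFc.intervalIntegrable _ _)
        (((continuous_const.mul (hψc.mul (Real.continuous_exp.comp hΨcont))).add
          (hg₂c.mul continuous_const)).intervalIntegrable _ _) (fun x hx => ?_)
      have hxtbar : tbar ≤ x := le_trans (le_trans ht₀ ht₀t₂) hx.1
      have hx0 : (0:ℝ) ≤ x := le_trans htbar hxtbar
      have hψx : 0 < ψ x := hψpos x hxtbar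
      have hg₁x : g₁ x ≤ (ρ/4) * ψ x :=
        le_of_lt ((div_lt_iff₀ hψx).1 (ht₁' x (le_trans ht₁'t₂ hx.1)))
      have hexpx : Real.exp (Ψ x) ≤ Real.exp (Ψ t) :=
        Real.exp_le_exp.2 (hΨmono x t hxtbar hx.2)
      have hexppos := Real.exp_pos (Ψ x)
      have hg₂x := hg₂nn x hx0
      simp only [hFdef]
      nlinarith [mul_le_mul_of_nonneg_right hg₁x hexppos.le,
        mul_le_mul_of_nonneg_left hexpx hg₂x]
    have hcalc : (∫ τ in t₂..t, ((ρ/4) * (ψ τ * Real.exp (Ψ τ)) + g₂ τ * Real.exp (Ψ t))) =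
        (ρ/4) * (Real.exp (Ψ t) - Real.exp (Ψ t₂)) + (∫ τ in t₂..t, g₂ τ) * Real.exp (Ψ t) := by
      have hi1 : IntervalIntegrable (fun τ => (ρ/4) * (ψ τ * Real.exp (Ψ τ)))
          MeasureTheory.volume t₂ t := Continuous.intervalIntegrable (by fun_prop) _ _
      have hi2 : IntervalIntegrable (fun τ => g₂ τ * Real.exp (Ψ t))
          MeasureTheory.volume t₂ t := Continuous.intervalIntegrable (by fun_prop) _ _
      rw [intervalIntegral.integral_add hi1 hi2,
        intervalIntegral.integral_const_mul, intervalIntegral.integral_mul_const, hFTC]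
    have h2 : (∫ τ in t₂..t, g₂ τ) < ρ/4 := htail₂ t htt₂
    have hexpt := Real.exp_pos (Ψ t)
    have hexpt₂ := Real.exp_pos (Ψ t₂)
    nlinarith [mul_le_mul_of_nonneg_right h2.le hexpt.le]
  -- first term estimate
  have h1 : z₀ * Real.exp (-∫ τ in t₀..t, ψ τ) ≤
      α * Real.exp (Ψ t₀) * Real.exp (-Ψ t) := by
    rw [hsub, show -(Ψ t - Ψ t₀) = Ψ t₀ + -(Ψ t) by ring, Real.exp_add, ← mul_assoc]
    exact mul_le_mul_of_nonneg_right
      (mul_le_mul_of_nonneg_right hz₀α.le (Real.exp_pos _).le) (Real.exp_pos _).le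
  have hexpneg : 0 < Real.exp (-Ψ t) := Real.exp_pos _
  have hcancel : Real.exp (Ψ t) * Real.exp (-Ψ t) = 1 := by
    rw [← Real.exp_add]; simp
  have h2 : (∫ τ in t₀..t, F τ) * Real.exp (-Ψ t) ≤ C * Real.exp (-Ψ t) + ρ/2 := by
    have := mul_le_mul_of_nonneg_right
      (by rw [hsplit] at *; linarith : (∫ τ in t₀..t, F τ) ≤ C + (ρ/2) * Real.exp (Ψ t))
      hexpneg.le
    calc (∫ τ in t₀..t, F τ) * Real.exp (-Ψ t)
        ≤ (C + (ρ/2) * Real.exp (Ψ t)) * Real.exp (-Ψ t) := this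
      _ = C * Real.exp (-Ψ t) + (ρ/2) * (Real.exp (Ψ t) * Real.exp (-Ψ t)) := by ring
      _ = C * Real.exp (-Ψ t) + ρ/2 := by rw [hcancel]; ring
  have hδt : Real.exp (-Ψ t) < δ := ht₃ t htt₃
  have hAδ : A * Real.exp (-Ψ t) < ρ/2 := by
    have h3 : A * Real.exp (-Ψ t) < A * δ := mul_lt_mul_of_pos_left hδt hA0
    have h4 : (A + 1) * δ = ρ/2 := by
      rw [hδdef, mul_comm]
      exact div_mul_cancel₀ _ (ne_of_gt (by linarith : (0:ℝ) < A + 1))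
    nlinarith
  rw [hrw]
  have hfin : α * Real.exp (Ψ t₀) * Real.exp (-Ψ t) + C * Real.exp (-Ψ t) =
      A * Real.exp (-Ψ t) := by rw [hAdef]; ring
  linarith [h1, h2, hAδ, hfin]
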